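/- arXiv:0802.0527 — 4 statements merged into one kernel-verified Lean document; each statement's English description precedes it below -/
import Mathlib

section
/- Let n ≥ 1, let A : ℝ → ℝ be differentiable with A(t) ≠ 0 for all t, and let U, τ : ZMod n → ℝ → ℝ² be differentiable families satisfying the edge-evolution law τᵢ'(t) = U_{i+1}(t) − U_{i−1}(t) for all i and t. Define ζ(t) = (1/A(t)) ∑ᵢ ⟨Uᵢ(t), τᵢ(t)⟩. Then for all t, (1/A(t)) ∑ᵢ ⟨Uᵢ'(t), τᵢ(t)⟩ = ζ'(t) + (A'(t)/A(t)) · ζ(t). -/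
open scoped RealInnerProductSpace

/-- Semi-discrete vorticity identity: if the tangential edge vectors evolve as
`τᵢ' = U_{i+1} - U_{i-1}`, then `(1/A) ∑ ⟪Uᵢ', τᵢ⟫ = ζ' + (A'/A) ζ` where
`ζ = (1/A) ∑ ⟪Uᵢ, τᵢ⟫`. -/
theorem semi_discrete_vorticity (n : ℕ) [NeZero n]
    (A : ℝ → ℝ) (hA : Differentiable ℝ A) (hA0 : ∀ t, A t ≠ 0)
    (U τ : ZMod n → ℝ → EuclideanSpace ℝ (Fin 2))
    (hU : ∀ i, Differentiable ℝ (U i)) (hτ : ∀ i, Differentiable ℝ (τ i))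
    (hlaw : ∀ i t, deriv (τ i) t = U (i + 1) t - U (i - 1) t) :
    ∀ t : ℝ,
      (1 / A t) * ∑ i : ZMod n, ⟪deriv (U i) t, τ i t⟫ =
        deriv (fun s => (1 / A s) * ∑ i : ZMod n, ⟪U i s, τ i s⟫) t +
          (deriv A t / A t) * ((1 / A t) * ∑ i : ZMod n, ⟪U i t, τ i t⟫) := by
  intro t
  set S : ℝ → ℝ := fun s => ∑ i : ZMod n, ⟪U i s, τ i s⟫ with hSdef
  -- derivative of S
  have hS : HasDerivAt S
      (∑ i : ZMod n, (⟪U i t, deriv (τ i) t⟫ + ⟪deriv (U i) t, τ i t⟫)) t := by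
    apply HasDerivAt.fun_sum
    intro i _
    exact ((hU i t).hasDerivAt).inner ℝ ((hτ i t).hasDerivAt)
  -- telescoping
  have htel : ∑ i : ZMod n, ⟪U i t, deriv (τ i) t⟫ = 0 := by
    have : ∀ i : ZMod n, ⟪U i t, deriv (τ i) t⟫ =
        ⟪U i t, U (i + 1) t⟫ - ⟪U i t, U (i - 1) t⟫ := by
      intro i; rw [hlaw i t, inner_sub_right]
    rw [Finset.sum_congr rfl (fun i _ => this i), Finset.sum_sub_distrib]
    have h1 : ∑ i : ZMod n, ⟪U i t, U (i + 1) t⟫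
        = ∑ i : ZMod n, ⟪U (i - 1) t, U i t⟫ := by
      apply Fintype.sum_equiv (Equiv.addRight (1 : ZMod n))
      intro i; simp [Equiv.addRight]
    rw [h1]
    rw [show (∑ i : ZMod n, ⟪U (i - 1) t, U i t⟫)
        = ∑ i : ZMod n, ⟪U i t, U (i - 1) t⟫ from
      Finset.sum_congr rfl (fun i _ => real_inner_comm _ _)]
    ring
  have hS' : HasDerivAt S (∑ i : ZMod n, ⟪deriv (U i) t, τ i t⟫) t := by
    have := hS
    rwa [Finset.sum_add_distrib, htel, zero_add] at this
  have hAt : HasDerivAt A (deriv A t) t := (hA t).hasDerivAt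
  have hinv : HasDerivAt (fun s => 1 / A s) (-(deriv A t) / (A t) ^ 2) t := by
    have := (hasDerivAt_const t (1:ℝ)).div hAt (hA0 t)
    simpa [Pi.div_def] using this
  have hq : HasDerivAt (fun s => (1 / A s) * S s)
      ((-(deriv A t) / (A t) ^ 2) * S t + (1 / A t) * (∑ i : ZMod n, ⟪deriv (U i) t, τ i t⟫)) t :=
    hinv.mul hS'
  rw [hq.deriv]
  have hSt : S t = ∑ i : ZMod n, ⟪U i t, τ i t⟫ := rfl
  rw [hSt]
  have h0 := hA0 t
  field_simp
  ring
end

section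
/- Let n ≥ 1, let A : ℝ → ℝ be differentiable with A(t) ≠ 0 for all t, let J : ℝ² → ℝ² be the rotation J(u₁,u₂) = (u₂, −u₁), and let U, N : ZMod n → ℝ → ℝ² be differentiable families satisfying the normal-evolution law Nᵢ'(t) = J(U_{i+1}(t)) − J(U_{i−1}(t)) for all i and t. Define δ̂(t) = (1/A(t)) ∑ᵢ ⟨Uᵢ(t), Nᵢ(t)⟩ and Γ(t) = (1/A(t)) ∑ᵢ ⟨Uᵢ(t), J(U_{i+1}(t)) − J(U_{i−1}(t))⟩. Then for all t, (1/A(t)) ∑ᵢ ⟨Uᵢ'(t), Nᵢ(t)⟩ = δ̂'(t) + (A'(t)/A(t)) · δ̂(t) − Γ(t). -/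
open scoped RealInnerProductSpace

/-- The planar rotation `J(u₁, u₂) = (u₂, -u₁)`, the analogue of `U × k̂`. -/
noncomputable def J (u : EuclideanSpace ℝ (Fin 2)) : EuclideanSpace ℝ (Fin 2) :=
  (WithLp.equiv 2 (Fin 2 → ℝ)).symm ![u 1, -u 0]

/-- Semi-discrete divergence identity: if the edge normal vectors evolve as
`Nᵢ' = J(U_{i+1}) - J(U_{i-1})`, then
`(1/A) ∑ ⟪Uᵢ', Nᵢ⟫ = δ̂' + (A'/A) δ̂ - Γ` where `δ̂ = (1/A) ∑ ⟪Uᵢ, Nᵢ⟫` and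
`Γ = (1/A) ∑ ⟪Uᵢ, J(U_{i+1}) - J(U_{i-1})⟫`. -/
theorem semi_discrete_divergence (n : ℕ) [NeZero n]
    (A : ℝ → ℝ) (hA : Differentiable ℝ A) (hA0 : ∀ t, A t ≠ 0)
    (U N : ZMod n → ℝ → EuclideanSpace ℝ (Fin 2))
    (hU : ∀ i, Differentiable ℝ (U i)) (hN : ∀ i, Differentiable ℝ (N i))
    (hlaw : ∀ i t, deriv (N i) t = J (U (i + 1) t) - J (U (i - 1) t)) :
    ∀ t : ℝ,
      (1 / A t) * ∑ i : ZMod n, ⟪deriv (U i) t, N i t⟫ =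
        deriv (fun s => (1 / A s) * ∑ i : ZMod n, ⟪U i s, N i s⟫) t +
          (deriv A t / A t) * ((1 / A t) * ∑ i : ZMod n, ⟪U i t, N i t⟫) -
          (1 / A t) * ∑ i : ZMod n, ⟪U i t, J (U (i + 1) t) - J (U (i - 1) t)⟫ := by
  intro t
  have hinner : ∀ i : ZMod n, DifferentiableAt ℝ (fun s => ⟪U i s, N i s⟫) t :=
    fun i => ((hU i).inner ℝ (hN i)).differentiableAt
  have hSdiff : DifferentiableAt ℝ (fun s => ∑ i : ZMod n, ⟪U i s, N i s⟫) t :=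
    DifferentiableAt.fun_sum (fun i _ => hinner i)
  have hSderiv : deriv (fun s => ∑ i : ZMod n, ⟪U i s, N i s⟫) t =
      (∑ i : ZMod n, ⟪deriv (U i) t, N i t⟫) +
      ∑ i : ZMod n, ⟪U i t, J (U (i + 1) t) - J (U (i - 1) t)⟫ := by
    rw [deriv_fun_sum (fun i _ => hinner i), ← Finset.sum_add_distrib]
    refine Finset.sum_congr rfl fun i _ => ?_
    rw [deriv_inner_apply ℝ ((hU i).differentiableAt) ((hN i).differentiableAt), hlaw i t,
      add_comm]
  have hinv : deriv (fun s => 1 / A s) t = -deriv A t / (A t) ^ 2 := by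
    simp only [one_div]
    exact deriv_inv'' (hA.differentiableAt) (hA0 t)
  have hmul : deriv (fun s => (1 / A s) * ∑ i : ZMod n, ⟪U i s, N i s⟫) t =
      (-deriv A t / (A t) ^ 2) * (∑ i : ZMod n, ⟪U i t, N i t⟫) +
      (1 / A t) * ((∑ i : ZMod n, ⟪deriv (U i) t, N i t⟫) +
        ∑ i : ZMod n, ⟪U i t, J (U (i + 1) t) - J (U (i - 1) t)⟫) := by
    have h1 : DifferentiableAt ℝ (fun s => 1 / A s) t := by
      simpa only [one_div] using (hA.differentiableAt (x := t)).fun_inv (hA0 t)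
    rw [deriv_fun_mul h1 hSdiff, hinv, hSderiv]
  rw [hmul]
  have h := hA0 t
  field_simp
  ring
end

section
/- Let f₀ be a real constant and let ζ, h, δ : ℝ → ℝ with ζ and h differentiable, h(t) ≠ 0 for all t, ζ'(t) = −(ζ(t) + f₀)·δ(t), and h'(t) = −h(t)·δ(t). Then the potential vorticity (ζ(t) + f₀)/h(t) is constant in time; equivalently its derivative is identically zero. -/
/-- Semi-discrete potential vorticity conservation: if `ζ' = -(ζ + f₀) δ` and
`h' = -h δ` with `h` never vanishing, then the potential vorticity `(ζ + f₀)/h`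
is constant in time; equivalently its derivative is identically zero. -/
theorem potential_vorticity_conservation (f₀ : ℝ) (ζ h δ : ℝ → ℝ)
    (hζ : Differentiable ℝ ζ) (hh : Differentiable ℝ h)
    (hh0 : ∀ t, h t ≠ 0)
    (hvort : ∀ t, deriv ζ t = -(ζ t + f₀) * δ t)
    (hmass : ∀ t, deriv h t = -h t * δ t) :
    (∀ s t : ℝ, (ζ s + f₀) / h s = (ζ t + f₀) / h t) ∧
      (∀ t : ℝ, deriv (fun s => (ζ s + f₀) / h s) t = 0) := by
  have hnum : Differentiable ℝ (fun s => ζ s + f₀) := hζ.add_const f₀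
  have hd : ∀ t, deriv (fun s => (ζ s + f₀) / h s) t = 0 := by
    intro t
    rw [deriv_fun_div (hnum t) (hh t) (hh0 t)]
    have : deriv (fun s => ζ s + f₀) t = deriv ζ t := by
      simp [deriv_add_const]
    rw [this, hvort, hmass]
    field_simp
    try ring
  refine ⟨fun s t => ?_, hd⟩
  exact is_const_of_deriv_eq_zero (hnum.div hh hh0) hd s t
end

section
/- Let N ≥ 1, let m : Fin N → ℝ with mₐ > 0 for all α, let f₀ ∈ ℝ, let J : ℝ² → ℝ² be the rotation J(u₁,u₂) = (u₂, −u₁), and let V : (Fin N → ℝ²) → ℝ be differentiable. Suppose X, U : ℝ → (Fin N → ℝ²) are differentiable with X'(t) = U(t) and, for each particle α, mₐ • Uₐ'(t) = −(∇V(X(t)))ₐ − (f₀ mₐ) • J(Uₐ(t)). Then the total energy E(t) = (1/2) ∑ₐ mₐ ‖Uₐ(t)‖² + V(X(t)) is constant in t. -/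
open scoped RealInnerProductSpace

lemma inner_J_self (u : EuclideanSpace ℝ (Fin 2)) : ⟪J u, u⟫ = 0 := by
  simp [J, PiLp.inner_apply, Fin.sum_univ_two, PiLp.toLp_apply]
  ring

/-- Energy conservation for the semi-discrete Euler–Lagrange particle equations of the
variational free-Lagrange method: if `X' = U` and
`mₐ • Uₐ' = -(∇V(X))ₐ - (f₀ mₐ) • J(Uₐ)` for every particle `α`, then the total energy
`E = (1/2) ∑ₐ mₐ ‖Uₐ‖² + V(X)` is constant in time. -/
theorem vfl_energy_conservation (N : ℕ) (hN : 1 ≤ N)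
    (m : Fin N → ℝ) (hm : ∀ α, 0 < m α) (f₀ : ℝ)
    (V : PiLp 2 (fun _ : Fin N => EuclideanSpace ℝ (Fin 2)) → ℝ)
    (hV : Differentiable ℝ V)
    (X U : ℝ → PiLp 2 (fun _ : Fin N => EuclideanSpace ℝ (Fin 2)))
    (hX : Differentiable ℝ X) (hU : Differentiable ℝ U)
    (hXeq : ∀ t, deriv X t = U t)
    (hUeq : ∀ (α : Fin N) (t : ℝ),
      m α • (deriv U t) α = -(gradient V (X t)) α - (f₀ * m α) • J ((U t) α)) :
    ∀ s t : ℝ,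
      (1 / 2) * ∑ α : Fin N, m α * ‖(U s) α‖ ^ 2 + V (X s) =
        (1 / 2) * ∑ α : Fin N, m α * ‖(U t) α‖ ^ 2 + V (X t) := by
  haveI : ContinuousSMul ℝ (PiLp 2 (fun _ : Fin N => EuclideanSpace ℝ (Fin 2))) :=
    IsBoundedSMul.continuousSMul
  set E : ℝ → ℝ := fun t =>
    (1 / 2) * ∑ α : Fin N, m α * ‖(U t) α‖ ^ 2 + V (X t) with hE
  have key : ∀ t, HasDerivAt E 0 t := by
    intro t
    -- derivative of each component of U
    have hUα : ∀ α : Fin N, HasDerivAt (fun s => (U s) α) ((deriv U t) α) t := by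
      intro α
      exact ((PiLp.proj (𝕜 := ℝ) 2 (fun _ : Fin N => EuclideanSpace ℝ (Fin 2))
        α).hasFDerivAt.comp_hasDerivAt t (hU t).hasDerivAt)
    -- kinetic part
    have hkin : HasDerivAt (fun s => (1 / 2) * ∑ α : Fin N, m α * ‖(U s) α‖ ^ 2)
        (∑ α : Fin N, m α * ⟪(deriv U t) α, (U t) α⟫) t := by
      have h1 : HasDerivAt (fun s => ∑ α : Fin N, m α * ‖(U s) α‖ ^ 2)
          (∑ α : Fin N, m α * (2 * ⟪(deriv U t) α, (U t) α⟫)) t := by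
        apply HasDerivAt.fun_sum
        intro α _
        have hn : HasDerivAt (fun s => ⟪(U s) α, (U s) α⟫)
            (⟪(U t) α, (deriv U t) α⟫ + ⟪(deriv U t) α, (U t) α⟫) t :=
          (hUα α).inner ℝ (hUα α)
        have hn' : HasDerivAt (fun s => ‖(U s) α‖ ^ 2)
            (2 * ⟪(deriv U t) α, (U t) α⟫) t := by
          have : (fun s => ‖(U s) α‖ ^ 2) = fun s => ⟪(U s) α, (U s) α⟫ := by
            funext s; rw [real_inner_self_eq_norm_sq]
          rw [this]
          convert hn using 1
          rw [real_inner_comm ((U t) α)]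
          ring
        exact hn'.const_mul (m α)
      have := h1.const_mul (1 / 2)
      refine this.congr_deriv ?_
      rw [Finset.mul_sum]
      congr 1; funext α; ring
    -- potential part
    have hpot : HasDerivAt (fun s => V (X s)) ⟪gradient V (X t), U t⟫ t := by
      have hG := (hV (X t)).hasGradientAt
      have hfd : HasFDerivAt V (InnerProductSpace.toDual ℝ _ (gradient V (X t))) (X t) :=
        hG.hasFDerivAt
      have hXd : HasDerivAt X (U t) t := by
        have := (hX t).hasDerivAt; rwa [hXeq t] at this
      have := hfd.comp_hasDerivAt t hXd
      rw [InnerProductSpace.toDual_apply_apply] at this; exact this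
    have htot := hkin.add hpot
    refine htot.congr_deriv ?_
    -- show sum = -⟪grad, U⟫
    have hsum : ∑ α : Fin N, m α * ⟪(deriv U t) α, (U t) α⟫
        = -⟪gradient V (X t), U t⟫ := by
      rw [PiLp.inner_apply, ← Finset.sum_neg_distrib]
      apply Finset.sum_congr rfl
      intro α _
      have h1 : (m α : ℝ) * ⟪(deriv U t) α, (U t) α⟫
          = ⟪m α • (deriv U t) α, (U t) α⟫ := by
        rw [real_inner_smul_left]
      rw [h1, hUeq α t]
      rw [sub_eq_add_neg, inner_add_left, inner_neg_left, inner_neg_left,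
        real_inner_smul_left, inner_J_self]
      ring
    rw [hsum]; ring
  have hconst := is_const_of_deriv_eq_zero (f := E)
    (fun t => (key t).differentiableAt) (fun t => (key t).deriv)
  intro s t
  exact hconst s t
end
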